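/- Let (X, d, T) be a topological dynamical system, ε > 0, and let K be a nonempty closed subset of X. Then sup_{x ∈ K} h̃_d(x, ε) ≥ R(K, ε), where h̃_d(x,ε) = inf{ R(K',ε) : K' a closed neighborhood of x }. -/
import Mathlib


open Filter MeasureTheory Set Topology

variable {X : Type*}

/-- The dynamical (Bowen) metric `d_n(x,y) = max_{0 ≤ k ≤ n-1} d(T^k x, T^k y)`. -/
noncomputable def dynDist [MetricSpace X] (T : X → X) (n : ℕ) (x y : X) : ℝ :=
  ⨆ k ∈ Finset.range n, dist (T^[k] x) (T^[k] y)

/-- The open dynamical ball `B_n(x, ε) = {y : d_n(x,y) < ε}`. -/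
def dynBall [MetricSpace X] (T : X → X) (n : ℕ) (x : X) (ε : ℝ) : Set X :=
  {y | dynDist T n x y < ε}

/-- `s_n(K, ε)`: the maximal cardinality of an `(n,ε)`-separated subset of `K`. -/
noncomputable def sepNum [MetricSpace X] (T : X → X) (n : ℕ) (K : Set X) (ε : ℝ) : ℕ :=
  sSup {m | ∃ E : Finset X, ↑E ⊆ K ∧
    (∀ x ∈ E, ∀ y ∈ E, x ≠ y → ε < dynDist T n x y) ∧ E.card = m}

/-- `S(K, ε) = limsup_n (1/n) log s_n(K, ε)`. -/
noncomputable def sepEnt [MetricSpace X] (T : X → X) (K : Set X) (ε : ℝ) : EReal :=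
  limsup (fun n : ℕ => ((Real.log (sepNum T n K ε) / n : ℝ) : EReal)) atTop

/-- `r_n(K, ε)`: the minimal cardinality of an `(n,ε)`-spanning set for `K`. -/
noncomputable def spanNum [MetricSpace X] (T : X → X) (n : ℕ) (K : Set X) (ε : ℝ) : ℕ :=
  sInf {m | ∃ F : Finset X, (∀ x ∈ K, ∃ y ∈ F, dynDist T n x y ≤ ε) ∧ F.card = m}

/-- `R(K, ε) = limsup_n (1/n) log r_n(K, ε)`. -/
noncomputable def spanEnt [MetricSpace X] (T : X → X) (K : Set X) (ε : ℝ) : EReal :=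
  limsup (fun n : ℕ => ((Real.log (spanNum T n K ε) / n : ℝ) : EReal)) atTop

/-- Upper metric mean dimension. -/
noncomputable def mdimUpper [MetricSpace X] (T : X → X) : EReal :=
  limsup (fun ε : ℝ => sepEnt T univ ε / ((Real.log (1 / ε) : ℝ) : EReal)) (𝓝[>] (0:ℝ))

/-- Lower metric mean dimension. -/
noncomputable def mdimLower [MetricSpace X] (T : X → X) : EReal :=
  liminf (fun ε : ℝ => sepEnt T univ ε / ((Real.log (1 / ε) : ℝ) : EReal)) (𝓝[>] (0:ℝ))

/-- The ergodic `T`-invariant Borel probability measures. -/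
def ergodicMeasures [MeasurableSpace X] (T : X → X) : Set (Measure X) :=
  {μ | IsProbabilityMeasure μ ∧ Ergodic T μ}

/-- `U` is a finite open cover of `X`. -/
def IsFiniteOpenCover [TopologicalSpace X] (U : Finset (Set X)) : Prop :=
  (∀ V ∈ U, IsOpen V) ∧ ⋃₀ (U : Set (Set X)) = univ

/-- The cover `U^n = ⋁_{i=0}^{n-1} T^{-i} U`. -/
def dynRefine (T : X → X) (U : Finset (Set X)) (n : ℕ) : Set (Set X) :=
  {V | ∃ f : Fin n → Set X, (∀ i, f i ∈ U) ∧ V = ⋂ i : Fin n, T^[(i : ℕ)] ⁻¹' f i}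

/-- `N(C)`: the minimal cardinality of a subcover of `C`. -/
noncomputable def coverNum (C : Set (Set X)) : ℕ :=
  sInf {m | ∃ F : Finset (Set X), ↑F ⊆ C ∧ ⋃₀ (F : Set (Set X)) = univ ∧ F.card = m}

/-- `N_μ(U^n, δ)`: minimal number of members of `U^n` needed to cover a set of measure ≥ δ. -/
noncomputable def shapiraNum [MeasurableSpace X] (T : X → X) (μ : Measure X)
    (U : Finset (Set X)) (n : ℕ) (δ : ℝ) : ℕ :=
  sInf {m | ∃ F : Finset (Set X), ↑F ⊆ dynRefine T U n ∧
    ENNReal.ofReal δ ≤ μ (⋃₀ (F : Set (Set X))) ∧ F.card = m}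

/-- Shapira's entropy `h_μ^S(U, δ) = limsup_n (1/n) log N_μ(U^n, δ)`. -/
noncomputable def shapiraEnt [MeasurableSpace X] (T : X → X) (μ : Measure X)
    (U : Finset (Set X)) (δ : ℝ) : EReal :=
  limsup (fun n : ℕ => ((Real.log (shapiraNum T μ U n δ) / n : ℝ) : EReal)) atTop

/-- `N_μ^δ(n, ε)`: smallest number of open `(n,ε)`-dynamical balls whose union has
measure `> δ`. -/
noncomputable def katokNum [MetricSpace X] [MeasurableSpace X] (T : X → X) (μ : Measure X)
    (n : ℕ) (ε δ : ℝ) : ℕ :=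
  sInf {m | ∃ F : Finset X, ENNReal.ofReal δ < μ (⋃ x ∈ F, dynBall T n x ε) ∧ F.card = m}

/-- Katok's entropy `h_μ^K(ε, δ) = limsup_n (1/n) log N_μ^δ(n, ε)`. -/
noncomputable def katokEnt [MetricSpace X] [MeasurableSpace X] (T : X → X) (μ : Measure X)
    (ε δ : ℝ) : EReal :=
  limsup (fun n : ℕ => ((Real.log (katokNum T μ n ε δ) / n : ℝ) : EReal)) atTop

/-- Lower Katok entropy `h̲_μ^K(ε, δ) = liminf_n (1/n) log N_μ^δ(n, ε)`. -/
noncomputable def katokEntLower [MetricSpace X] [MeasurableSpace X] (T : X → X) (μ : Measure X)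
    (ε δ : ℝ) : EReal :=
  liminf (fun n : ℕ => ((Real.log (katokNum T μ n ε δ) / n : ℝ) : EReal)) atTop

/-- `Ñ_μ^δ(n, ε)`: smallest number of sets of `d_n`-diameter ≤ ε whose union has
measure `> δ`. -/
noncomputable def katokNumTilde [MetricSpace X] [MeasurableSpace X] (T : X → X) (μ : Measure X)
    (n : ℕ) (ε δ : ℝ) : ℕ :=
  sInf {m | ∃ F : Finset (Set X), (∀ A ∈ F, ∀ x ∈ A, ∀ y ∈ A, dynDist T n x y ≤ ε) ∧
    ENNReal.ofReal δ < μ (⋃₀ (F : Set (Set X))) ∧ F.card = m}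

/-- Brin–Katok local entropy `h_μ^{BK}(x, ε) = limsup_n -(1/n) log μ(B_n(x, ε))`. -/
noncomputable def brinKatok [MetricSpace X] [MeasurableSpace X] (T : X → X) (μ : Measure X)
    (x : X) (ε : ℝ) : EReal :=
  limsup (fun n : ℕ => -(ENNReal.log (μ (dynBall T n x ε))) / (n : EReal)) atTop

/-- Lower Brin–Katok local entropy `h̲_μ^{BK}(x, ε) = liminf_n -(1/n) log μ(B_n(x, ε))`. -/
noncomputable def brinKatokLower [MetricSpace X] [MeasurableSpace X] (T : X → X) (μ : Measure X)
    (x : X) (ε : ℝ) : EReal :=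
  liminf (fun n : ℕ => -(ENNReal.log (μ (dynBall T n x ε))) / (n : EReal)) atTop

/-- Local entropy function `h_d(x, ε) = inf { S(K, ε) : K closed neighborhood of x }`. -/
noncomputable def locEnt [MetricSpace X] (T : X → X) (x : X) (ε : ℝ) : EReal :=
  ⨅ K ∈ {K : Set X | IsClosed K ∧ K ∈ 𝓝 x}, sepEnt T K ε

/-- Local spanning entropy `h̃_d(x, ε) = inf { R(K, ε) : K closed neighborhood of x }`. -/
noncomputable def locSpanEnt [MetricSpace X] (T : X → X) (x : X) (ε : ℝ) : EReal :=
  ⨅ K ∈ {K : Set X | IsClosed K ∧ K ∈ 𝓝 x}, spanEnt T K ε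

/-- `U_x^n`: the union of all cells of `U^n` containing `x`. -/
def dynCoverCell (T : X → X) (U : Finset (Set X)) (n : ℕ) (x : X) : Set X :=
  ⋃₀ {V | V ∈ dynRefine T U n ∧ x ∈ V}

set_option linter.unusedSectionVars false

section Aux

variable [MetricSpace X] [CompactSpace X]

private lemma natlog_mono {m m' : ℕ} (h : m ≤ m') : Real.log m ≤ Real.log m' := by
  rcases Nat.eq_zero_or_pos m with rfl | hm
  · simpa using Real.log_natCast_nonneg m'
  · exact Real.log_le_log (by exact_mod_cast hm) (by exact_mod_cast h)

private lemma dynDist_le' {T : X → X} {n : ℕ} {x y : X} {ε : ℝ} (hε : 0 ≤ ε)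
    (h : ∀ k < n, dist (T^[k] x) (T^[k] y) ≤ ε) : dynDist T n x y ≤ ε :=
  Real.iSup_le (fun k => Real.iSup_le (fun hk => h k (Finset.mem_range.mp hk)) hε) hε

private lemma exists_spanSet (T : X → X) (hT : Continuous T) (n : ℕ) {ε : ℝ} (hε : 0 < ε)
    (K : Set X) :
    {m | ∃ F : Finset X, (∀ x ∈ K, ∃ y ∈ F, dynDist T n x y ≤ ε) ∧ F.card = m}.Nonempty := by
  obtain ⟨F, hF⟩ := isCompact_univ.elim_finite_subcover
    (fun c : X => ⋂ k ∈ Finset.range n, (T^[k]) ⁻¹' Metric.ball (T^[k] c) ε)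
    (fun c => isOpen_biInter_finset fun k _ =>
      Metric.isOpen_ball.preimage (hT.iterate k))
    (fun x _ => mem_iUnion.mpr ⟨x, by simp [hε]⟩)
  refine ⟨F.card, F, fun x _ => ?_, rfl⟩
  obtain ⟨c, hc, hx⟩ := mem_iUnion₂.mp (hF (mem_univ x))
  refine ⟨c, hc, dynDist_le' hε.le fun k hk => ?_⟩
  have h2 := mem_iInter₂.mp hx k (Finset.mem_range.mpr hk)
  exact (Metric.mem_ball.mp h2).le

private lemma spanNum_mono (T : X → X) (hT : Continuous T) (n : ℕ) {ε : ℝ} (hε : 0 < ε)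
    {K K' : Set X} (h : K ⊆ K') : spanNum T n K ε ≤ spanNum T n K' ε := by
  obtain ⟨F, hF, hc⟩ := Nat.sInf_mem (exists_spanSet T hT n hε K')
  exact Nat.sInf_le ⟨F, fun x hx => hF x (h hx), hc⟩

private lemma spanNum_union [DecidableEq X] (T : X → X) (hT : Continuous T) (n : ℕ) {ε : ℝ} (hε : 0 < ε)
    (K K' : Set X) :
    spanNum T n (K ∪ K') ε ≤ spanNum T n K ε + spanNum T n K' ε := by
  obtain ⟨F, hF, hc⟩ := Nat.sInf_mem (exists_spanSet T hT n hε K)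
  obtain ⟨F', hF', hc'⟩ := Nat.sInf_mem (exists_spanSet T hT n hε K')
  calc spanNum T n (K ∪ K') ε ≤ (F ∪ F').card := by
        refine Nat.sInf_le ⟨F ∪ F', fun x hx => ?_, rfl⟩
        rcases hx with hx | hx
        · exact (hF x hx).imp fun y hy => ⟨Finset.mem_union_left _ hy.1, hy.2⟩
        · exact (hF' x hx).imp fun y hy => ⟨Finset.mem_union_right _ hy.1, hy.2⟩
    _ ≤ F.card + F'.card := Finset.card_union_le _ _
    _ = _ := by rw [spanNum, spanNum, ← hc, ← hc']

private lemma spanEnt_mono (T : X → X) (hT : Continuous T) {ε : ℝ} (hε : 0 < ε)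
    {K K' : Set X} (h : K ⊆ K') : spanEnt T K ε ≤ spanEnt T K' ε := by
  refine limsup_le_limsup (Eventually.of_forall fun n => ?_)
  simp only [EReal.coe_le_coe_iff]
  exact div_le_div_of_nonneg_right (natlog_mono (spanNum_mono T hT n hε h))
    (Nat.cast_nonneg n)


private lemma spanEnt_union (T : X → X) (hT : Continuous T) {ε : ℝ} (hε : 0 < ε)
    (K K' : Set X) :
    spanEnt T (K ∪ K') ε ≤ max (spanEnt T K ε) (spanEnt T K' ε) := by
  classical
  set u : ℕ → EReal := fun n => ((Real.log 2 / n : ℝ) : EReal) with hu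
  set v : ℕ → EReal := fun n =>
    max ((Real.log (spanNum T n K ε) / n : ℝ) : EReal)
      ((Real.log (spanNum T n K' ε) / n : ℝ) : EReal) with hv
  have hulim : limsup u atTop = 0 := by
    have : Tendsto u atTop (nhds ((0:ℝ) : EReal)) :=
      EReal.tendsto_coe.mpr (tendsto_const_div_atTop_nhds_zero_nat (Real.log 2))
    simpa using this.limsup_eq
  have key : ∀ n : ℕ, ((Real.log (spanNum T n (K ∪ K') ε) / n : ℝ) : EReal) ≤ u n + v n := by
    intro n
    set a := spanNum T n K ε with ha
    set b := spanNum T n K' ε with hb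
    have hreal : Real.log (spanNum T n (K ∪ K') ε) ≤
        Real.log 2 + max (Real.log a) (Real.log b) := by
      have hmax : Real.log (max a b : ℕ) = max (Real.log a) (Real.log b) := by
        rcases le_total a b with hab | hab
        · rw [max_eq_right hab, max_eq_right (natlog_mono hab)]
        · rw [max_eq_left hab, max_eq_left (natlog_mono hab)]
      have h2 : Real.log (spanNum T n (K ∪ K') ε) ≤ Real.log ((2 * max a b : ℕ)) := by
        refine natlog_mono (le_trans (spanNum_union T hT n hε K K') ?_)
        rw [two_mul]
        exact add_le_add (le_max_left a b) (le_max_right a b)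
      rcases Nat.eq_zero_or_pos (max a b) with hm | hm
      · rw [hm] at h2
        simp only [Nat.mul_zero, Nat.cast_zero, Real.log_zero] at h2
        refine h2.trans (add_nonneg (Real.log_nonneg one_le_two) ?_)
        exact le_max_of_le_left (Real.log_natCast_nonneg a)
      · refine h2.trans ?_
        rw [Nat.cast_mul, Real.log_mul (by norm_num)
          (by exact_mod_cast hm.ne'), ← hmax]
        norm_num
    calc ((Real.log (spanNum T n (K ∪ K') ε) / n : ℝ) : EReal)
        ≤ (((Real.log 2 + max (Real.log a) (Real.log b)) / n : ℝ) : EReal) := by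
          exact_mod_cast div_le_div_of_nonneg_right hreal (Nat.cast_nonneg n)
      _ = u n + v n := by
          rw [add_div, ← max_div_div_right (by positivity : (0:ℝ) ≤ (n:ℝ))]
          rw [EReal.coe_add, EReal.coe_strictMono.monotone.map_max]
  calc spanEnt T (K ∪ K') ε ≤ limsup (fun n => u n + v n) atTop :=
        limsup_le_limsup (Eventually.of_forall key)
    _ ≤ limsup u atTop + limsup v atTop :=
        EReal.limsup_add_le (Or.inl (by rw [hulim]; exact EReal.zero_ne_bot))
          (Or.inl (by rw [hulim]; exact EReal.zero_ne_top))
    _ = max (spanEnt T K ε) (spanEnt T K' ε) := by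
        rw [hulim, zero_add, hv, limsup_max]
        rfl


private lemma spanEnt_nonneg (T : X → X) {ε : ℝ} {K : Set X} : 0 ≤ spanEnt T K ε := by
  refine le_limsup_of_frequently_le (Frequently.of_forall fun n => ?_)
  have : (0:ℝ) ≤ Real.log (spanNum T n K ε) / n :=
    div_nonneg (Real.log_natCast_nonneg _) (Nat.cast_nonneg n)
  exact_mod_cast this

private lemma spanEnt_empty_le (T : X → X) {ε : ℝ} {a : EReal} (ha : 0 ≤ a) :
    spanEnt T ∅ ε ≤ a := by
  have h0 : ∀ n : ℕ, spanNum T n (∅ : Set X) ε = 0 := fun n =>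
    Nat.le_zero.mp (Nat.sInf_le ⟨∅, by simp, rfl⟩)
  have : spanEnt T (∅ : Set X) ε = 0 := by
    rw [spanEnt]
    have : (fun n : ℕ => ((Real.log (spanNum T n (∅ : Set X) ε) / n : ℝ) : EReal)) =
        fun _ => (0 : EReal) := by
      funext n; simp [h0 n]
    rw [this, limsup_const]
  rw [this]; exact ha

private lemma spanEnt_biUnion_le (T : X → X) (hT : Continuous T) {ε : ℝ} (hε : 0 < ε)
    {ι : Type*} (s : Finset ι) (f : ι → Set X) {a : EReal} (ha : 0 ≤ a)
    (h : ∀ i ∈ s, spanEnt T (f i) ε ≤ a) : spanEnt T (⋃ i ∈ s, f i) ε ≤ a := by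
  classical
  induction s using Finset.induction_on with
  | empty => simpa using spanEnt_empty_le T ha
  | @insert x s hx ih =>
      rw [Finset.set_biUnion_insert]
      refine le_trans (spanEnt_union T hT hε _ _) (max_le (h x (Finset.mem_insert_self x s))
        (ih fun i hi => h i (Finset.mem_insert_of_mem hi)))

end Aux

section Theorems

variable [MetricSpace X] [CompactSpace X] [Nonempty X] [MeasurableSpace X] [BorelSpace X]

/-- On a nonempty closed set `K`, the supremum of the local spanning entropy function
dominates the spanning entropy `R(K, ε)` (Lemma 7.2). -/
theorem spanEnt_le_iSup_locSpanEnt (T : X → X) (hT : IsHomeomorph T)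
    (ε : ℝ) (hε : 0 < ε) (K : Set X) (hK : IsClosed K) (hKne : K.Nonempty) :
    spanEnt T K ε ≤ ⨆ x ∈ K, locSpanEnt T x ε := by
  have hTc : Continuous T := hT.continuous
  refine le_of_forall_gt_imp_ge_of_dense fun a ha => ?_
  obtain ⟨x₀, hx₀⟩ := hKne
  have hloc0 : ∀ x : X, (0:EReal) ≤ locSpanEnt T x ε := fun x =>
    le_iInf₂ fun K' _ => spanEnt_nonneg T
  have ha0 : (0:EReal) ≤ a :=
    le_trans (le_trans (hloc0 x₀) (le_iSup₂ (f := fun x _ => locSpanEnt T x ε) x₀ hx₀)) ha.le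
  have key : ∀ x : X, x ∈ K → ∃ K' : Set X,
      (IsClosed K' ∧ K' ∈ 𝓝 x) ∧ spanEnt T K' ε ≤ a := by
    intro x hx
    have h1 : locSpanEnt T x ε < a :=
      lt_of_le_of_lt (le_iSup₂ (f := fun x _ => locSpanEnt T x ε) x hx) ha
    rw [locSpanEnt, iInf_lt_iff] at h1
    obtain ⟨K', h1⟩ := h1
    rw [iInf_lt_iff] at h1
    obtain ⟨hmem, h1⟩ := h1
    exact ⟨K', hmem, h1.le⟩
  choose g hg1 hg2 using key
  obtain ⟨s, hs⟩ := hK.isCompact.elim_finite_subcover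
    (fun x : K => interior (g x.1 x.2))
    (fun _ => isOpen_interior)
    (fun x hx => mem_iUnion.mpr ⟨⟨x, hx⟩, mem_interior_iff_mem_nhds.mpr (hg1 x hx).2⟩)
  have hsub : K ⊆ ⋃ i ∈ s, g i.1 i.2 :=
    hs.trans (iUnion₂_mono fun i _ => interior_subset)
  calc spanEnt T K ε ≤ spanEnt T (⋃ i ∈ s, g i.1 i.2) ε := spanEnt_mono T hTc hε hsub
    _ ≤ a := spanEnt_biUnion_le T hTc hε s _ ha0 (fun i _ => hg2 i.1 i.2)

end Theorems
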